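/- Let p and q be probability vectors on {1,…,n}, let j ∈ {1,…,n} with p_j > 0, and let k ≥ 1 be a real number such that q_j = k·p_j. Then Σ_{i=1}^n [ max(p_i, q_i) − (1 + (k−1)·p_j) · max(p_i, q_i/k) ] ≥ 0. -/
import Mathlib


/-- Main technical inequality in the proof that Gumbel coupling dominates Weighted
MinHash: if `p j > 0` and `q j = k * p j` with `k ≥ 1`, then
`∑ i, (max (p i) (q i) - (1 + (k - 1) * p j) * max (p i) (q i / k)) ≥ 0`. -/
theorem stmt_12 (n : ℕ) (p q : Fin n → ℝ)
    (hp0 : ∀ i, 0 ≤ p i) (hp1 : ∑ i, p i = 1)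
    (hq0 : ∀ i, 0 ≤ q i) (hq1 : ∑ i, q i = 1)
    (j : Fin n) (hpj : 0 < p j)
    (k : ℝ) (hk : 1 ≤ k) (hqj : q j = k * p j) :
    0 ≤ ∑ i, (max (p i) (q i) - (1 + (k - 1) * p j) * max (p i) (q i / k)) := by
  have hk0 : (0:ℝ) < k := lt_of_lt_of_le one_pos hk
  have hpj1 : p j ≤ 1 := hp1 ▸ Finset.single_le_sum (fun i _ => hp0 i) (Finset.mem_univ j)
  have hqjk : q j / k = p j := by rw [hqj]; field_simp
  have hB : ∀ i, max (p i) (q i / k) = p i + max 0 (q i / k - p i) := by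
    intro i
    rcases le_total (q i / k) (p i) with h | h
    · rw [max_eq_left h, max_eq_left (by linarith)]; ring
    · rw [max_eq_right h, max_eq_right (by linarith)]; ring
  set D : Fin n → ℝ := fun i =>
    max (p i) (q i) - max (p i) (q i / k) - (k - 1) * p j * max 0 (q i / k - p i) with hD
  have key : ∀ i, 0 ≤ D i := by
    intro i
    have hq := hq0 i; have hp := hp0 i
    have hqk : 0 ≤ q i / k := div_nonneg hq hk0.le
    simp only [hD]
    rcases le_total (q i / k) (p i) with h | h
    · rw [max_eq_left h, max_eq_left (by linarith : q i / k - p i ≤ 0)]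
      have := le_max_left (p i) (q i)
      nlinarith
    · have hqq : q i / k ≤ q i := by
        rw [div_le_iff₀ hk0]; nlinarith
      rw [max_eq_right h, max_eq_right (le_trans h hqq),
        max_eq_right (by linarith : (0:ℝ) ≤ q i / k - p i)]
      have hqi : q i = k * (q i / k) := by field_simp
      nlinarith [mul_nonneg (mul_nonneg (by linarith : (0:ℝ) ≤ k - 1)
          (by linarith : (0:ℝ) ≤ 1 - p j)) hqk,
        mul_nonneg (mul_nonneg (by linarith : (0:ℝ) ≤ k - 1) (hp0 j)) hp]
  have expand : ∀ i ∈ Finset.univ, max (p i) (q i) - (1 + (k - 1) * p j) * max (p i) (q i / k)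
      = D i - (k - 1) * p j * p i := by
    intro i _
    simp only [hD]
    rw [hB i]; ring
  rw [Finset.sum_congr rfl expand, Finset.sum_sub_distrib, ← Finset.mul_sum, hp1, mul_one]
  have hDj : D j = (k - 1) * p j := by
    simp only [hD]
    rw [hqjk, hqj, max_eq_right (by nlinarith : p j ≤ k * p j), sub_self, max_self, max_self]
    ring
  have hle : D j ≤ ∑ i, D i := Finset.single_le_sum (fun i _ => key i) (Finset.mem_univ j)
  linarith [hle, hDj]
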